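/- Kolchin's linear disjointness theorem: if (K, δ) is a differential field and k is a differential subfield (closed under δ), then k is linearly disjoint from the constant field C_K over the constant field C_k = k ∩ C_K; that is, any elements of k linearly independent over C_k remain linearly independent over C_K. -/

import Mathlib

section KolchinAux

variable {K : Type*} [Field K]

lemma kol_dzero (δ : K → K) (hadd : ∀ x y : K, δ (x + y) = δ x + δ y) : δ 0 = 0 := by
  have h : δ 0 = δ 0 + δ 0 := by rw [← hadd]; norm_num
  exact (left_eq_add.mp h)

lemma kol_done (δ : K → K) (hmul : ∀ x y : K, δ (x * y) = x * δ y + y * δ x) : δ 1 = 0 := by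
  have h : δ 1 = δ 1 + δ 1 := by
    have := hmul 1 1; simpa using this
  exact (left_eq_add.mp h)

lemma kol_dneg (δ : K → K) (hadd : ∀ x y : K, δ (x + y) = δ x + δ y) (x : K) :
    δ (-x) = - δ x := by
  have h : δ (x + -x) = δ x + δ (-x) := hadd x (-x)
  simp only [add_neg_cancel, kol_dzero δ hadd] at h
  exact eq_neg_of_add_eq_zero_right h.symm

lemma kol_dinv (δ : K → K) (hadd : ∀ x y : K, δ (x + y) = δ x + δ y)
    (hmul : ∀ x y : K, δ (x * y) = x * δ y + y * δ x) (x : K) (hx : δ x = 0) :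
    δ x⁻¹ = 0 := by
  rcases eq_or_ne x 0 with rfl | hx0
  · simpa using kol_dzero δ hadd
  · have h := hmul x x⁻¹
    rw [mul_inv_cancel₀ hx0, kol_done δ hmul, hx, mul_zero, add_zero] at h
    exact (mul_eq_zero.mp h.symm).resolve_left hx0

lemma kol_dsum (δ : K → K) (hadd : ∀ x y : K, δ (x + y) = δ x + δ y)
    {ι : Type*} (s : Finset ι) (g : ι → K) :
    δ (∑ i ∈ s, g i) = ∑ i ∈ s, δ (g i) := by
  classical
  induction s using Finset.induction_on with
  | empty => simpa using kol_dzero δ hadd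
  | insert _ _ hi ih => rename_i a s'; rw [Finset.sum_insert hi, Finset.sum_insert hi, hadd, ih]

/-- The subfield of constants. -/
def kolConst (δ : K → K) (hadd : ∀ x y : K, δ (x + y) = δ x + δ y)
    (hmul : ∀ x y : K, δ (x * y) = x * δ y + y * δ x) : Subfield K where
  carrier := {x | δ x = 0}
  mul_mem' := by intro a b ha hb; show δ (a * b) = 0; rw [hmul]; rw [Set.mem_setOf_eq] at ha hb
                 rw [ha, hb]; ring
  one_mem' := kol_done δ hmul
  add_mem' := by intro a b ha hb; show δ (a + b) = 0; rw [hadd]; rw [Set.mem_setOf_eq] at ha hb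
                 rw [ha, hb]; ring
  zero_mem' := kol_dzero δ hadd
  neg_mem' := by intro a ha; show δ (-a) = 0; rw [kol_dneg δ hadd]; rw [Set.mem_setOf_eq] at ha
                 rw [ha]; ring
  inv_mem' := fun a ha => kol_dinv δ hadd hmul a ha

/-- Dropping an index preserves hand-written independence. -/
lemma kol_drop {m : ℕ} (k : Subfield K) (δ : K → K)
    (hadd : ∀ x y : K, δ (x + y) = δ x + δ y) (d : Fin (m + 1) → K) (j : Fin (m + 1))
    (hindep : ∀ f : Fin (m + 1) → K, (∀ l, f l ∈ k ∧ δ (f l) = 0) →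
      (∑ l, f l * d l) = 0 → ∀ l, f l = 0) :
    ∀ f : Fin m → K, (∀ i, f i ∈ k ∧ δ (f i) = 0) →
      (∑ i, f i * d (j.succAbove i)) = 0 → ∀ i, f i = 0 := by
  intro f hf hsum i
  have key := hindep (j.insertNth 0 f) ?_ ?_ (j.succAbove i)
  · rwa [Fin.insertNth_apply_succAbove] at key
  · intro l
    rcases eq_or_ne l j with rfl | hl
    · rw [Fin.insertNth_apply_same]
      exact ⟨zero_mem k, kol_dzero δ hadd⟩
    · obtain ⟨i', rfl⟩ := Fin.exists_succAbove_eq hl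
      rw [Fin.insertNth_apply_succAbove]
      exact hf i'
  · rw [Fin.sum_univ_succAbove _ j]
    simp only [Fin.insertNth_apply_same, Fin.insertNth_apply_succAbove, zero_mul, zero_add]
    exact hsum

/-- Key lemma: constants of `K` that are linearly independent over the constants of `k`
remain linearly independent over `k`. -/
lemma kol_key (k : Subfield K) (δ : K → K)
    (hadd : ∀ x y : K, δ (x + y) = δ x + δ y)
    (hmul : ∀ x y : K, δ (x * y) = x * δ y + y * δ x)
    (hδk : ∀ x ∈ k, δ x ∈ k) (m : ℕ) :
    ∀ (d : Fin m → K), (∀ j, δ (d j) = 0) →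
      (∀ f : Fin m → K, (∀ j, f j ∈ k ∧ δ (f j) = 0) → (∑ j, f j * d j) = 0 → ∀ j, f j = 0) →
      ∀ a : Fin m → K, (∀ j, a j ∈ k) → (∑ j, a j * d j) = 0 → ∀ j, a j = 0 := by
  induction m using Nat.strong_induction_on with
  | _ m IH =>
    intro d hd hindep a ha hsum
    by_contra hcon
    push_neg at hcon
    obtain ⟨j0, hj0⟩ := hcon
    match m, d, hd, hindep, a, ha, hsum, j0, hj0, IH with
    | m' + 1, d, hd, hindep, a, ha, hsum, j0, hj0, IH =>
    by_cases hz : ∃ j, a j = 0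
    · -- drop a zero coefficient and use induction
      obtain ⟨j, hj⟩ := hz
      have hsum' : (∑ i, a (j.succAbove i) * d (j.succAbove i)) = 0 := by
        rw [Fin.sum_univ_succAbove _ j, hj, zero_mul, zero_add] at hsum
        exact hsum
      have key := IH m' (Nat.lt_succ_self m') (fun i => d (j.succAbove i))
        (fun i => hd _) (kol_drop k δ hadd d j hindep) (fun i => a (j.succAbove i))
        (fun i => ha _) hsum'
      rcases eq_or_ne j0 j with rfl | hne
      · exact hj0 hj
      · obtain ⟨i', rfl⟩ := Fin.exists_succAbove_eq hne
        exact hj0 (key i')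
    · -- all coefficients nonzero; divide by `a 0` and differentiate
      push_neg at hz
      set f : Fin (m' + 1) → K := fun l => a l * (a 0)⁻¹ with hf
      have hf0 : f 0 = 1 := mul_inv_cancel₀ (hz 0)
      have hfk : ∀ l, f l ∈ k := fun l => mul_mem (ha l) (inv_mem (ha 0))
      have hfsum : (∑ l, f l * d l) = 0 := by
        have : (∑ l, f l * d l) = (∑ l, a l * d l) * (a 0)⁻¹ := by
          rw [Finset.sum_mul]; apply Finset.sum_congr rfl; intro l _; ring
        rw [this, hsum, zero_mul]
      have hder : (∑ l, δ (f l) * d l) = 0 := by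
        have h1 : δ (∑ l, f l * d l) = 0 := by rw [hfsum]; exact kol_dzero δ hadd
        rw [kol_dsum δ hadd] at h1
        calc (∑ l, δ (f l) * d l) = ∑ l, δ (f l * d l) := by
              apply Finset.sum_congr rfl; intro l _
              rw [hmul (f l) (d l), hd l, mul_zero, zero_add, mul_comm]
          _ = 0 := h1
      have hdf0 : δ (f 0) = 0 := by rw [hf0]; exact kol_done δ hmul
      have hder' : (∑ i, δ (f ((0 : Fin (m' + 1)).succAbove i)) * d ((0 : Fin (m' + 1)).succAbove i)) = 0 := by
        rw [Fin.sum_univ_succAbove _ 0, hdf0, zero_mul, zero_add] at hder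
        exact hder
      have key := IH m' (Nat.lt_succ_self m') (fun i => d ((0 : Fin (m' + 1)).succAbove i))
        (fun i => hd _) (kol_drop k δ hadd d 0 hindep)
        (fun i => δ (f ((0 : Fin (m' + 1)).succAbove i)))
        (fun i => hδk _ (hfk _)) hder'
      have hdfall : ∀ l, δ (f l) = 0 := by
        intro l
        rcases eq_or_ne l 0 with rfl | hne
        · exact hdf0
        · obtain ⟨i', rfl⟩ := Fin.exists_succAbove_eq hne
          exact key i'
      have := hindep f (fun l => ⟨hfk l, hdfall l⟩) hfsum 0
      rw [hf0] at this
      exact one_ne_zero this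

end KolchinAux


/-- Kolchin's linear disjointness theorem: if `(K, δ)` is a differential field and `k`
is a differential subfield, then `k` is linearly disjoint from the constant field `C_K`
over `C_k = k ∩ C_K`: any finite tuple of elements of `k` that is linearly independent
over the constants of `k` remains linearly independent over the constants of `K`.
Linear independence over the respective constant fields is expressed by hand: only the
trivial linear combination with constant coefficients vanishes. -/
theorem kolchin_linear_disjointness {K : Type*} [Field K] (δ : K → K)
    (hadd : ∀ x y : K, δ (x + y) = δ x + δ y)
    (hmul : ∀ x y : K, δ (x * y) = x * δ y + y * δ x)
    (k : Subfield K) (hδk : ∀ x ∈ k, δ x ∈ k) :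
    ∀ (n : ℕ) (a : Fin n → K), (∀ i, a i ∈ k) →
      (∀ c : Fin n → K, (∀ i, c i ∈ k ∧ δ (c i) = 0) →
        (∑ i, c i * a i) = 0 → ∀ i, c i = 0) →
      ∀ c : Fin n → K, (∀ i, δ (c i) = 0) →
        (∑ i, c i * a i) = 0 → ∀ i, c i = 0 := by
  intro n a ha hli c hc hsum i
  classical
  set F : Subfield K := kolConst δ hadd hmul ⊓ k with hF
  have hFconst : ∀ x : F, δ (x : K) = 0 := fun x => x.2.1
  have hFk : ∀ x : F, (x : K) ∈ k := fun x => x.2.2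
  -- span of the c's over F
  set V : Submodule F K := Submodule.span F (Set.range c) with hV
  haveI : Module.Finite F V := Module.Finite.span_of_finite F (Set.finite_range c)
  haveI : Module.Free F V := Module.Free.of_divisionRing F V
  set m := Module.finrank F V with hm
  set b : Module.Basis (Fin m) F V := Module.finBasis F V with hb
  set d : Fin m → K := fun j => (b j : K) with hd
  -- every element of the span is a constant
  have hVconst : ∀ x ∈ V, δ x = 0 := by
    intro x hx
    induction hx using Submodule.span_induction with
    | mem x hx => obtain ⟨i, rfl⟩ := hx; exact hc i
    | zero => exact kol_dzero δ hadd
    | add x y hx hy ihx ihy => rw [hadd, ihx, ihy, add_zero]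
    | smul s x hx ihx =>
      rw [Algebra.smul_def]
      show δ ((s : K) * x) = 0
      rw [hmul, ihx, hFconst s, mul_zero, mul_zero, add_zero]
  have hdc : ∀ j, δ (d j) = 0 := fun j => hVconst _ (b j).2
  -- the basis is independent over F, in the hand-written sense
  have hli' : LinearIndependent F d := by
    have h1 := b.linearIndependent
    have h2 := h1.map' V.subtype (Submodule.ker_subtype V)
    exact h2
  have hindep : ∀ f : Fin m → K, (∀ j, f j ∈ k ∧ δ (f j) = 0) →
      (∑ j, f j * d j) = 0 → ∀ j, f j = 0 := by
    intro f hf hfsum j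
    set g : Fin m → F := fun j => ⟨f j, (hf j).2, (hf j).1⟩ with hg
    have : ∑ j, g j • d j = 0 := by
      calc (∑ j, g j • d j) = ∑ j, f j * d j := by
            apply Finset.sum_congr rfl; intro l _
            rw [Algebra.smul_def]; rfl
        _ = 0 := hfsum
    have hz := Fintype.linearIndependent_iff.mp hli' g this j
    exact congrArg Subtype.val hz
  -- expand the c's in the basis
  have hcV : ∀ i, c i ∈ V := fun i => Submodule.subset_span ⟨i, rfl⟩
  set e : Fin n → Fin m → F := fun i j => b.repr ⟨c i, hcV i⟩ j with he
  have hrepr : ∀ i, c i = ∑ j, (e i j : K) * d j := by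
    intro i
    have h1 := b.sum_repr ⟨c i, hcV i⟩
    have h2 := congrArg (Subtype.val : V → K) h1
    refine Eq.trans h2.symm ?_
    rw [AddSubmonoidClass.coe_finset_sum]
    apply Finset.sum_congr rfl; intro j _
    rw [Submodule.coe_smul, Algebra.smul_def]; rfl
  -- regroup the relation
  have hrel : (∑ j, (∑ i', (e i' j : K) * a i') * d j) = 0 := by
    calc (∑ j, (∑ i', (e i' j : K) * a i') * d j)
        = ∑ j, ∑ i', (e i' j : K) * a i' * d j := by
          apply Finset.sum_congr rfl; intro j _; rw [Finset.sum_mul]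
      _ = ∑ i', ∑ j, (e i' j : K) * a i' * d j := Finset.sum_comm
      _ = ∑ i', c i' * a i' := by
          apply Finset.sum_congr rfl; intro i' _
          conv_rhs => rw [hrepr i']
          rw [Finset.sum_mul]
          apply Finset.sum_congr rfl; intro j _; ring
      _ = 0 := hsum
  have hcoef : ∀ j, (∑ i', (e i' j : K) * a i') = 0 := by
    intro j
    refine kol_key k δ hadd hmul hδk m d hdc hindep _ ?_ hrel j
    intro j'
    exact Subfield.sum_mem k fun i' _ => mul_mem (hFk (e i' j')) (ha i')
  have hez : ∀ i' j, (e i' j : K) = 0 := by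
    intro i' j
    exact hli (fun i'' => (e i'' j : K)) (fun i'' => ⟨hFk _, hFconst _⟩) (hcoef j) i'
  rw [hrepr i]
  apply Finset.sum_eq_zero
  intro j _
  rw [hez i j, zero_mul]
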